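/- Let ρ be a density matrix indexed by (Fin 2 × Fin 2) such that Tr((Tr_A ρ)²) = 1, i.e., the reduced state of the second qubit is pure. Then ρ factorizes as the Kronecker product of its reduced states: ρ = (Tr_B ρ) ⊗ (Tr_A ρ). -/

import Mathlib

open ComplexOrder Kronecker
open Matrix

/-- A density matrix: Hermitian, positive semidefinite, trace one. -/
def IsDensityMatrix {n : Type*} [Fintype n] [DecidableEq n] (ρ : Matrix n n ℂ) : Prop :=
  ρ.IsHermitian ∧ ρ.PosSemidef ∧ ρ.trace = 1

/-- Partial trace over the first factor. -/
noncomputable def ptraceA {nA nB : ℕ} (M : Matrix (Fin nA × Fin nB) (Fin nA × Fin nB) ℂ) :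
    Matrix (Fin nB) (Fin nB) ℂ :=
  Matrix.of fun j j' => ∑ i, M (i, j) (i, j')

/-- Partial trace over the second factor. -/
noncomputable def ptraceB {nA nB : ℕ} (M : Matrix (Fin nA × Fin nB) (Fin nA × Fin nB) ℂ) :
    Matrix (Fin nA) (Fin nA) ℂ :=
  Matrix.of fun i i' => ∑ j, M (i, j) (i', j)

lemma eq_zero_of_trace_conjTranspose_mul_self {m n : Type*} [Fintype m] [Fintype n]
    (B : Matrix m n ℂ) (h : (Bᴴ * B).trace = 0) : B = 0 := by
  have key : (Bᴴ * B).trace = ((∑ j, ∑ i, Complex.normSq (B i j) : ℝ) : ℂ) := by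
    simp [Matrix.trace, Matrix.diag, Matrix.mul_apply, Matrix.conjTranspose_apply,
      Complex.normSq_eq_conj_mul_self]
  rw [key] at h
  have h' : ∑ j, ∑ i, Complex.normSq (B i j) = 0 := by exact_mod_cast h
  ext i j
  have h1 := (Finset.sum_eq_zero_iff_of_nonneg (fun j _ =>
    Finset.sum_nonneg fun i _ => Complex.normSq_nonneg _)).mp h' j (Finset.mem_univ _)
  have h2 := (Finset.sum_eq_zero_iff_of_nonneg (fun i _ =>
    Complex.normSq_nonneg _)).mp h1 i (Finset.mem_univ _)
  simpa using Complex.normSq_eq_zero.mp h2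

lemma exists_vec (σ : Matrix (Fin 2) (Fin 2) ℂ) (a d : ℝ) (ha : 0 ≤ a) (hd : 0 ≤ d)
    (h00 : σ 0 0 = (a : ℂ)) (h11 : σ 1 1 = (d : ℂ)) (hh : σ 0 1 = star (σ 1 0))
    (hdet : σ 0 0 * σ 1 1 = σ 0 1 * σ 1 0) :
    ∃ v : Fin 2 → ℂ, ∀ j k, σ j k = v j * star (v k) := by
  by_cases hz : a = 0
  · have hprod : σ 0 1 * σ 1 0 = 0 := by
      rw [← hdet, h00, hz]; simp
    have hb : σ 1 0 = 0 := by
      rcases mul_eq_zero.mp hprod with h | h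
      · rw [h] at hh; exact star_eq_zero.mp hh.symm
      · exact h
    refine ⟨![0, Real.sqrt d], fun j k => ?_⟩
    have hdd : (Real.sqrt d : ℂ) * (Real.sqrt d : ℂ) = (d : ℂ) := by
      rw [← Complex.ofReal_mul, Real.mul_self_sqrt hd]
    fin_cases j <;> fin_cases k <;>
      simp [h00, h11, hz, hb, hh, Complex.star_def, Complex.conj_ofReal, hdd]
  · have ha' : (0:ℝ) < a := lt_of_le_of_ne ha (Ne.symm hz)
    have hsq : (Real.sqrt a : ℂ) ≠ 0 := by
      exact_mod_cast (Real.sqrt_pos.mpr ha').ne'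
    have haa : (Real.sqrt a : ℂ) * (Real.sqrt a : ℂ) = (a : ℂ) := by
      rw [← Complex.ofReal_mul, Real.mul_self_sqrt ha]
    refine ⟨![(Real.sqrt a : ℂ), σ 1 0 / (Real.sqrt a : ℂ)], fun j k => ?_⟩
    fin_cases j <;> fin_cases k <;>
      simp only [Fin.mk_zero, Fin.mk_one, Matrix.cons_val_zero, Matrix.cons_val_one,
        Matrix.head_cons, Complex.star_def, map_div₀, Complex.conj_ofReal]
    · rw [h00, haa]
    · rw [hh, Complex.star_def]; field_simp
    · field_simp
    · rw [h11]
      have hdet' : (a : ℂ) * (d : ℂ) = (starRingEnd ℂ) (σ 1 0) * σ 1 0 := by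
        rw [← h00, ← h11, hdet, hh, Complex.star_def]
      field_simp
      linear_combination (d:ℂ)*haa + hdet'

lemma kron_conjT {m n p q : Type*} (A : Matrix m n ℂ) (B : Matrix p q ℂ) :
    (A ⊗ₖ B)ᴴ = Aᴴ ⊗ₖ Bᴴ := by
  ext ⟨i, j⟩ ⟨k, l⟩
  simp [Matrix.conjTranspose_apply, Matrix.kroneckerMap_apply, star_mul', mul_comm]

lemma kron_sub_right {m n p q : Type*} (A : Matrix m n ℂ) (B C : Matrix p q ℂ) :
    A ⊗ₖ (B - C) = A ⊗ₖ B - A ⊗ₖ C := by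
  ext ⟨i, j⟩ ⟨k, l⟩
  simp [Matrix.kroneckerMap_apply, Matrix.sub_apply, mul_sub]

lemma kron_one_sub (Q : Matrix (Fin 2) (Fin 2) ℂ) :
    (1 : Matrix (Fin 2) (Fin 2) ℂ) ⊗ₖ ((1 : Matrix (Fin 2) (Fin 2) ℂ) - Q)
      = 1 - (1 : Matrix (Fin 2) (Fin 2) ℂ) ⊗ₖ Q := by
  rw [kron_sub_right, Matrix.one_kronecker_one]

/-- If the reduced state of the second qubit of a two-qubit state ρ is pure,
then ρ factorizes as the Kronecker product of its reduced states. -/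
theorem factorization_of_reduced_pure (ρ : Matrix (Fin 2 × Fin 2) (Fin 2 × Fin 2) ℂ)
    (hρ : IsDensityMatrix ρ)
    (hpure : (ptraceA ρ * ptraceA ρ).trace = 1) :
    ρ = ptraceB ρ ⊗ₖ ptraceA ρ := by
  obtain ⟨hherm, hpsd, htr⟩ := hρ
  obtain ⟨C, hC⟩ : ∃ C : Matrix (Fin 2 × Fin 2) (Fin 2 × Fin 2) ℂ, ρ = Cᴴ * C := by
    open scoped MatrixOrder in
    obtain ⟨B, hB⟩ := CStarAlgebra.nonneg_iff_eq_star_mul_self.mp hpsd.nonneg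
    exact ⟨B, hB⟩
  have hdiag : ∀ x, ρ x x = ((∑ k, Complex.normSq (C k x) : ℝ) : ℂ) := by
    intro x
    rw [hC]
    simp [Matrix.mul_apply, Matrix.conjTranspose_apply, Complex.normSq_eq_conj_mul_self]
  set σ := ptraceA ρ with hσdef
  have hσ : ∀ j k, σ j k = ∑ i, ρ (i, j) (i, k) := fun j k => rfl
  set a : ℝ := ∑ i : Fin 2, ∑ k, Complex.normSq (C k (i, 0)) with hadef
  set d : ℝ := ∑ i : Fin 2, ∑ k, Complex.normSq (C k (i, 1)) with hddef
  have ha : 0 ≤ a := Finset.sum_nonneg fun _ _ =>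
    Finset.sum_nonneg fun _ _ => Complex.normSq_nonneg _
  have hd : 0 ≤ d := Finset.sum_nonneg fun _ _ =>
    Finset.sum_nonneg fun _ _ => Complex.normSq_nonneg _
  have h00 : σ 0 0 = (a : ℂ) := by
    rw [hσ 0 0, hadef]
    simp only [hdiag]
    push_cast
    ring
  have h11 : σ 1 1 = (d : ℂ) := by
    rw [hσ 1 1, hddef]
    simp only [hdiag]
    push_cast
    ring
  have hh : σ 0 1 = star (σ 1 0) := by
    rw [hσ 0 1, hσ 1 0, Fin.sum_univ_two, Fin.sum_univ_two, star_add,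
      hherm.apply, hherm.apply]
  have htrσ : σ 0 0 + σ 1 1 = 1 := by
    have h := htr
    simp only [Matrix.trace, Matrix.diag, Fintype.sum_prod_type, Fin.sum_univ_two] at h
    rw [hσ 0 0, hσ 1 1, Fin.sum_univ_two, Fin.sum_univ_two]
    linear_combination h
  have hdet : σ 0 0 * σ 1 1 = σ 0 1 * σ 1 0 := by
    have h := hpure
    simp only [Matrix.trace, Matrix.diag, Matrix.mul_apply, Fin.sum_univ_two] at h
    linear_combination (σ 0 0 + σ 1 1 + 1) / 2 * htrσ - h / 2
  obtain ⟨v, hv⟩ := exists_vec σ a d ha hd h00 h11 hh hdet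
  have hunit : v 0 * star (v 0) + v 1 * star (v 1) = 1 := by
    rw [← hv 0 0, ← hv 1 1]; exact htrσ
  have hv' : ∀ j k, ρ (0, j) (0, k) + ρ (1, j) (1, k) = v j * star (v k) := by
    intro j k
    have h := hv j k
    rw [hσ j k, Fin.sum_univ_two] at h
    exact h
  set Q : Matrix (Fin 2) (Fin 2) ℂ := Matrix.of fun j k => v j * star (v k) with hQdef
  have hQapp : ∀ j k, Q j k = v j * star (v k) := fun j k => rfl
  have hQherm : Qᴴ = Q := by
    ext j k
    simp [Matrix.conjTranspose_apply, hQapp, mul_comm]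
  have hQQ : Q * Q = Q := by
    ext j k
    simp only [Matrix.mul_apply, Fin.sum_univ_two, hQapp]
    linear_combination (v j * star (v k)) * hunit
  set E : Matrix (Fin 2 × Fin 2) (Fin 2 × Fin 2) ℂ :=
    (1 : Matrix (Fin 2) (Fin 2) ℂ) ⊗ₖ ((1 : Matrix (Fin 2) (Fin 2) ℂ) - Q) with hEdef
  have hPherm : ((1 : Matrix (Fin 2) (Fin 2) ℂ) - Q)ᴴ = 1 - Q := by
    rw [conjTranspose_sub, conjTranspose_one, hQherm]
  have hEherm : Eᴴ = E := by
    rw [hEdef, kron_conjT, conjTranspose_one, hPherm]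
  have hEE : E * E = E := by
    rw [hEdef, ← Matrix.mul_kronecker_mul, one_mul]
    rw [sub_mul, one_mul, mul_sub, mul_one, hQQ]
    abel
  have htrQ : (ρ * ((1 : Matrix (Fin 2) (Fin 2) ℂ) ⊗ₖ Q)).trace = 1 := by
    simp only [Matrix.trace, Matrix.diag, Matrix.mul_apply, Fintype.sum_prod_type,
      Matrix.kroneckerMap_apply, Matrix.one_apply, hQapp, Fin.sum_univ_two,
      Fin.reduceEq, reduceIte, one_mul, zero_mul, mul_one, mul_zero, ite_mul, mul_ite,
      add_zero, zero_add]
    linear_combination (v 0 * star (v 0)) * hv' 0 0 + (v 1 * star (v 0)) * hv' 0 1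
      + (v 0 * star (v 1)) * hv' 1 0 + (v 1 * star (v 1)) * hv' 1 1
      + (v 0 * star (v 0) + v 1 * star (v 1) + 1) * hunit
  have hsub : E = 1 - (1 : Matrix (Fin 2) (Fin 2) ℂ) ⊗ₖ Q := kron_one_sub Q
  have htrE : (ρ * E).trace = 0 := by
    rw [hsub, mul_sub, mul_one, Matrix.trace_sub, htr, htrQ, sub_self]
  have hCE : C * E = 0 := by
    apply eq_zero_of_trace_conjTranspose_mul_self
    have hCE1 : (C * E)ᴴ * (C * E) = E * (ρ * E) := by
      rw [conjTranspose_mul, hEherm, Matrix.mul_assoc, ← Matrix.mul_assoc Cᴴ, ← hC]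
    rw [hCE1, Matrix.trace_mul_comm, Matrix.mul_assoc, hEE, htrE]
  have hρE : ρ * E = 0 := by
    rw [hC, Matrix.mul_assoc, hCE, Matrix.mul_zero]
  have hR : ρ * ((1 : Matrix (Fin 2) (Fin 2) ℂ) ⊗ₖ Q) = ρ := by
    rw [hsub, mul_sub, mul_one, sub_eq_zero] at hρE
    exact hρE.symm
  have hL : ((1 : Matrix (Fin 2) (Fin 2) ℂ) ⊗ₖ Q) * ρ = ρ := by
    have h1 := congrArg Matrix.conjTranspose hR
    rwa [conjTranspose_mul, hherm.eq, kron_conjT, conjTranspose_one, hQherm] at h1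
  have hEntry : ∀ i i' j j', ρ (i, j) (i', j')
      = (∑ l, (∑ k, star (v k) * ρ (i, k) (i', l)) * v l) * (v j * star (v j')) := by
    intro i i' j j'
    have e1 := congrFun (congrFun hR (i, j)) (i', j')
    have e2a := congrFun (congrFun hL (i, j)) (i', 0)
    have e2b := congrFun (congrFun hL (i, j)) (i', 1)
    fin_cases i <;> fin_cases i' <;>
      simp only [Matrix.mul_apply, Fintype.sum_prod_type, Matrix.kroneckerMap_apply,
        Matrix.one_apply, hQapp, Fin.sum_univ_two, Fin.mk_zero, Fin.mk_one,
        Fin.reduceEq, reduceIte, one_mul, zero_mul, mul_one, mul_zero, ite_mul, mul_ite,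
        add_zero, zero_add] at e1 e2a e2b <;>
      simp only [Fin.sum_univ_two, Fin.mk_zero, Fin.mk_one] <;>
      linear_combination -e1 - (v 0 * star (v j')) * e2a - (v 1 * star (v j')) * e2b
  ext ⟨i, j⟩ ⟨i', j'⟩
  show ρ (i, j) (i', j') = ptraceB ρ i i' * σ j j'
  rw [hv j j']
  show ρ (i, j) (i', j') = (∑ m, ρ (i, m) (i', m)) * (v j * star (v j'))
  rw [Fin.sum_univ_two]
  linear_combination hEntry i i' j j'
    - (v j * star (v j')) * (hEntry i i' 0 0 + hEntry i i' 1 1)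
    - ((∑ l, (∑ k, star (v k) * ρ (i, k) (i', l)) * v l) * (v j * star (v j'))) * hunit
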